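/- Let w be a connected positive weight on n vertices and A(w) its weight matrix. Let L > 0 and M > 0 be such that L ≤ w i j for every ordered pair (i, j) with w i j > 0, and |w i j − w j i| ≤ M for all i, j. Then: (1) w i j / w j i ≤ 1 + M/L for every ordered pair (i, j) with w i j > 0; and (2) if r : Fin n → ℝ × ℝ with coordinate functions rˣ, rʸ satisfies (A(w))ᵀ *ᵥ rˣ = 0 and (A(w))ᵀ *ᵥ rʸ = 0 and r is not identically zero, then ‖r i‖ ≤ (1 + M/L)^(n−1) · ‖r j‖ for all i, j ∈ Fin n. -/

import Mathlib

open Matrix Finset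

/-- The weight matrix `A(w)`: off-diagonal entries `w i j`, diagonal entry
`-(∑ j ≠ i, w i j)`. -/
def weightMatrix {n : ℕ} (w : Fin n → Fin n → ℝ) : Matrix (Fin n) (Fin n) ℝ :=
  Matrix.of fun i j => if i = j then -(∑ k ∈ Finset.univ.erase i, w i k) else w i j

/-- A connected positive weight on `n` vertices. -/
def IsConnPosWeight {n : ℕ} (w : Fin n → Fin n → ℝ) : Prop :=
  (∀ i, w i i = 0) ∧ (∀ i j, 0 ≤ w i j) ∧
  (∀ i j : Fin n, i ≠ j → (0 < w i j ↔ 0 < w j i)) ∧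
  (SimpleGraph.fromRel fun i j : Fin n => 0 < w i j).Connected

/-- The Euclidean norm on `ℝ × ℝ`. -/
noncomputable def norm2 (a : ℝ × ℝ) : ℝ := Real.sqrt (a.1 ^ 2 + a.2 ^ 2)

private lemma walk_cross {V : Type*} [DecidableEq V] {G : SimpleGraph V} {S : Finset V} :
    ∀ {u v : V}, G.Walk u v → u ∈ S → v ∉ S → ∃ a ∈ S, ∃ b, b ∉ S ∧ G.Adj a b
  | u, _, SimpleGraph.Walk.nil, hu, hv => absurd hu hv
  | u, v, @SimpleGraph.Walk.cons _ _ _ x _ h q, hu, hv => by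
    by_cases hx : x ∈ S
    · exact walk_cross q hx hv
    · exact ⟨u, hu, x, hx, h⟩


/-- If `L` lower-bounds all positive weights and `M` bounds all differences `|wᵢⱼ - wⱼᵢ|`,
then all weight ratios are at most `1 + M/L`, and the norms of any not-identically-zero
left-kernel family `r : Fin n → ℝ × ℝ` are comparable with ratio at most
`(1 + M/L)^(n-1)`. -/
theorem stmt_13 {n : ℕ} (hn : 2 ≤ n) (w : Fin n → Fin n → ℝ)
    (hw : IsConnPosWeight w) (L M : ℝ) (hL : 0 < L) (hM : 0 < M)
    (hLw : ∀ i j, 0 < w i j → L ≤ w i j)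
    (hMw : ∀ i j, |w i j - w j i| ≤ M) :
    (∀ i j, 0 < w i j → w i j / w j i ≤ 1 + M / L) ∧
      (∀ r : Fin n → ℝ × ℝ,
        (weightMatrix w)ᵀ *ᵥ (fun i => (r i).1) = 0 →
        (weightMatrix w)ᵀ *ᵥ (fun i => (r i).2) = 0 →
        r ≠ 0 →
        ∀ i j, norm2 (r i) ≤ (1 + M / L) ^ (n - 1) * norm2 (r j)) := by

  obtain ⟨hdiag, hnonneg, hsymm, hconn⟩ := hw
  have hρ1 : (1:ℝ) ≤ 1 + M / L := by
    have : 0 < M / L := div_pos hM hL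
    linarith
  set ρ : ℝ := 1 + M / L with hρdef
  have hρ0 : (0:ℝ) < ρ := lt_of_lt_of_le one_pos hρ1
  have ratio : ∀ i j, w i j ≤ ρ * w j i := by
    intro i j
    rcases lt_or_eq_of_le (hnonneg i j) with hpos | h0
    · have hij : i ≠ j := by rintro rfl; rw [hdiag] at hpos; exact lt_irrefl _ hpos
      have hji : 0 < w j i := (hsymm i j hij).1 hpos
      have hLji : L ≤ w j i := hLw j i hji
      have h1 : w i j - w j i ≤ M := (abs_le.1 (hMw i j)).2
      have h2 : M ≤ M / L * w j i := by
        rw [div_mul_eq_mul_div, le_div_iff₀ hL]; nlinarith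
      calc w i j ≤ w j i + M := by linarith
        _ ≤ w j i + M / L * w j i := by linarith
        _ = ρ * w j i := by rw [hρdef]; ring
    · rw [← h0]; exact mul_nonneg hρ0.le (hnonneg j i)
  have part1 : ∀ i j, 0 < w i j → w i j / w j i ≤ ρ := by
    intro i j hpos
    have hij : i ≠ j := by rintro rfl; rw [hdiag] at hpos; exact lt_irrefl _ hpos
    have hji : 0 < w j i := (hsymm i j hij).1 hpos
    rw [div_le_iff₀ hji]; exact ratio i j
  refine ⟨part1, ?_⟩
  intro r hx hy _hr0
  set z : Fin n → ℂ := fun i => (r i).1 + (r i).2 * Complex.I with hz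
  set f : Fin n → ℝ := fun i => ‖z i‖ with hf
  have hfnorm : ∀ i, norm2 (r i) = f i := by
    intro i
    rw [hf, hz]
    simp only [norm2, Complex.norm_add_mul_I]
  have hf0 : ∀ i, 0 ≤ f i := fun i => norm_nonneg _
  -- scalar kernel equations
  have key : ∀ (x : Fin n → ℝ), (weightMatrix w)ᵀ *ᵥ x = 0 →
      ∀ j, (∑ k, w j k) * x j = ∑ i, w i j * x i := by
    intro x hxx j
    have h0 : ∑ i, weightMatrix w i j * x i = 0 := by
      have := congrFun hxx j
      simpa [Matrix.mulVec, dotProduct, Matrix.transpose_apply] using this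
    rw [← Finset.add_sum_erase _ (fun i => weightMatrix w i j * x i) (Finset.mem_univ j)] at h0
    have hd : weightMatrix w j j = -(∑ k ∈ Finset.univ.erase j, w j k) := by
      simp [weightMatrix]
    have hoff : ∀ i ∈ Finset.univ.erase j, weightMatrix w i j * x i = w i j * x i := by
      intro i hi
      have hij : i ≠ j := Finset.ne_of_mem_erase hi
      simp [weightMatrix, hij]
    rw [hd, Finset.sum_congr rfl hoff] at h0
    have e1 : ∑ k ∈ Finset.univ.erase j, w j k = ∑ k, w j k := by
      rw [← Finset.add_sum_erase _ (fun k => w j k) (Finset.mem_univ j), hdiag, zero_add]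
    have e2 : ∑ i ∈ Finset.univ.erase j, w i j * x i = ∑ i, w i j * x i := by
      rw [← Finset.add_sum_erase _ (fun i => w i j * x i) (Finset.mem_univ j), hdiag,
        zero_mul, zero_add]
    rw [e1, e2] at h0
    linarith
  have keyx := key _ hx
  have keyy := key _ hy
  have zkey : ∀ j, ((∑ k, w j k : ℝ) : ℂ) * z j = ∑ i, ((w i j : ℝ) : ℂ) * z i := by
    intro j
    apply Complex.ext
    · simp only [Complex.re_sum, Complex.mul_re, hz, Complex.add_re, Complex.I_re,
        Complex.I_im, Complex.ofReal_re, Complex.ofReal_im, Complex.mul_im, Complex.add_im]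
      ring_nf
      exact keyx j
    · simp only [Complex.im_sum, Complex.mul_im, hz, Complex.add_re, Complex.add_im,
        Complex.I_re, Complex.I_im, Complex.ofReal_re, Complex.ofReal_im, Complex.mul_re,
        Complex.mul_im]
      ring_nf
      exact keyy j
  have Hsub : ∀ j, f j * (∑ k, w j k) ≤ ∑ i, w i j * f i := by
    intro j
    have hD : 0 ≤ ∑ k, w j k := Finset.sum_nonneg fun k _ => hnonneg j k
    calc f j * (∑ k, w j k)
        = ‖((∑ k, w j k : ℝ) : ℂ) * z j‖ := by
          rw [norm_mul, Complex.norm_real, Real.norm_eq_abs, abs_of_nonneg hD, mul_comm]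
      _ = ‖∑ i, ((w i j : ℝ) : ℂ) * z i‖ := by rw [zkey]
      _ ≤ ∑ i, ‖((w i j : ℝ) : ℂ) * z i‖ := norm_sum_le _ _
      _ = ∑ i, w i j * f i := by
          refine Finset.sum_congr rfl fun i _ => ?_
          rw [norm_mul, Complex.norm_real, Real.norm_eq_abs, abs_of_nonneg (hnonneg i j)]
  have hcross : ∀ S : Finset (Fin n), S.Nonempty → S ≠ Finset.univ →
      ∃ a ∈ S, ∃ b, b ∉ S ∧ 0 < w b a := by
    intro S hne hU
    obtain ⟨a0, ha0⟩ := hne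
    obtain ⟨b0, hb0⟩ : ∃ b, b ∉ S := by
      by_contra hcon; push_neg at hcon
      exact hU (Finset.eq_univ_iff_forall.2 hcon)
    obtain ⟨p⟩ := hconn.preconnected a0 b0
    obtain ⟨a, ha, b, hb, hadj⟩ := walk_cross p ha0 hb0
    rw [SimpleGraph.fromRel_adj] at hadj
    obtain ⟨hab, h1 | h2⟩ := hadj
    · exact ⟨a, ha, b, hb, (hsymm a b hab).1 h1⟩
    · exact ⟨a, ha, b, hb, h2⟩
  have hstep : ∀ S : Finset (Fin n), S.Nonempty → S ≠ Finset.univ → ∀ m : ℝ,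
      (∀ a ∈ S, m ≤ f a) → ∃ b, b ∉ S ∧ m ≤ ρ * f b := by
    intro S hne hU m hm
    obtain ⟨a, ha, b, hb, hwba⟩ := hcross S hne hU
    rcases le_or_gt m 0 with hm0 | hm0
    · exact ⟨b, hb, hm0.trans (mul_nonneg hρ0.le (hf0 b))⟩
    by_contra hcon
    push_neg at hcon
    set P := S ×ˢ Sᶜ with hP
    have hmemP : ∀ p : Fin n × Fin n, p ∈ P → p.1 ∈ S ∧ p.2 ∉ S := by
      intro p hp
      rw [hP, Finset.mem_product] at hp
      exact ⟨hp.1, Finset.mem_compl.1 hp.2⟩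
    have habP : (a, b) ∈ P := by
      rw [hP, Finset.mem_product]
      exact ⟨ha, Finset.mem_compl.2 hb⟩
    have hOI : ∑ p ∈ P, w p.1 p.2 * f p.1 ≤ ∑ p ∈ P, w p.2 p.1 * f p.2 := by
      have hsum : ∑ j ∈ S, f j * (∑ k, w j k) ≤ ∑ j ∈ S, ∑ i, w i j * f i :=
        Finset.sum_le_sum fun j _ => Hsub j
      have hL1 : ∀ j : Fin n, f j * (∑ k, w j k)
          = (∑ k ∈ S, w j k * f j) + ∑ k ∈ Sᶜ, w j k * f j := by
        intro j
        rw [mul_comm, ← Finset.sum_add_sum_compl S (fun k => w j k), add_mul,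
          Finset.sum_mul, Finset.sum_mul]
      have hR1 : ∀ j : Fin n, ∑ i, w i j * f i
          = (∑ i ∈ S, w i j * f i) + ∑ i ∈ Sᶜ, w i j * f i :=
        fun j => (Finset.sum_add_sum_compl S _).symm
      simp only [hL1, hR1] at hsum
      rw [Finset.sum_add_distrib, Finset.sum_add_distrib] at hsum
      have hAB : ∑ j ∈ S, ∑ k ∈ S, w j k * f j = ∑ j ∈ S, ∑ i ∈ S, w i j * f i :=
        Finset.sum_comm
      rw [hP, Finset.sum_product, Finset.sum_product]
      linarith
    have c1 : ∑ p ∈ P, w p.2 p.1 * f p.1 ≤ ρ * ∑ p ∈ P, w p.1 p.2 * f p.1 := by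
      rw [Finset.mul_sum]
      refine Finset.sum_le_sum fun p _ => ?_
      calc w p.2 p.1 * f p.1 ≤ (ρ * w p.1 p.2) * f p.1 :=
            mul_le_mul_of_nonneg_right (ratio _ _) (hf0 _)
        _ = ρ * (w p.1 p.2 * f p.1) := by ring
    have c3 : m * ∑ p ∈ P, w p.2 p.1 ≤ ∑ p ∈ P, w p.2 p.1 * f p.1 := by
      rw [Finset.mul_sum]
      refine Finset.sum_le_sum fun p hp => ?_
      calc m * w p.2 p.1 = w p.2 p.1 * m := mul_comm _ _
        _ ≤ w p.2 p.1 * f p.1 :=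
            mul_le_mul_of_nonneg_left (hm _ (hmemP p hp).1) (hnonneg _ _)
    have c4 : ρ * ∑ p ∈ P, w p.2 p.1 * f p.2 < m * ∑ p ∈ P, w p.2 p.1 := by
      rw [Finset.mul_sum, Finset.mul_sum]
      refine Finset.sum_lt_sum (fun p hp => ?_) ⟨(a, b), habP, ?_⟩
      · calc ρ * (w p.2 p.1 * f p.2) = w p.2 p.1 * (ρ * f p.2) := by ring
          _ ≤ w p.2 p.1 * m :=
              mul_le_mul_of_nonneg_left (hcon p.2 (hmemP p hp).2).le (hnonneg _ _)
          _ = m * w p.2 p.1 := mul_comm _ _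
      · show ρ * (w b a * f b) < m * (w b a)
        calc ρ * (w b a * f b) = w b a * (ρ * f b) := by ring
          _ < w b a * m := mul_lt_mul_of_pos_left (hcon b hb) hwba
          _ = m * w b a := mul_comm _ _
    have c5 : ρ * ∑ p ∈ P, w p.1 p.2 * f p.1 ≤ ρ * ∑ p ∈ P, w p.2 p.1 * f p.2 :=
      mul_le_mul_of_nonneg_left hOI hρ0.le
    linarith
  have hgrow : ∀ k : ℕ, ∀ i : Fin n, ∃ S : Finset (Fin n),
      i ∈ S ∧ min (k + 1) n ≤ S.card ∧ ∀ a ∈ S, f i ≤ ρ ^ k * f a := by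
    intro k
    induction k with
    | zero =>
      intro i
      refine ⟨{i}, Finset.mem_singleton_self i, ?_, ?_⟩
      · rw [Finset.card_singleton]; omega
      · intro a ha
        rw [Finset.mem_singleton] at ha
        subst ha
        simp
    | succ k ih =>
      intro i
      obtain ⟨S, hiS, hcard, hb⟩ := ih i
      have hmono : ∀ a ∈ S, f i ≤ ρ ^ (k + 1) * f a := by
        intro a ha
        refine (hb a ha).trans ?_
        have h1 : ρ ^ k ≤ ρ ^ (k + 1) := pow_le_pow_right₀ hρ1 (Nat.le_succ k)
        exact mul_le_mul_of_nonneg_right h1 (hf0 a)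
      by_cases hU : S = Finset.univ
      · refine ⟨S, hiS, ?_, hmono⟩
        subst hU
        simp [Finset.card_univ]
      · have hne : S.Nonempty := ⟨i, hiS⟩
        have hρk : (0:ℝ) < ρ ^ k := pow_pos hρ0 k
        obtain ⟨b, hbS, hbf⟩ := hstep S hne hU (f i / ρ ^ k) (fun a ha => by
          rw [div_le_iff₀ hρk]
          calc f i ≤ ρ ^ k * f a := hb a ha
            _ = f a * ρ ^ k := mul_comm _ _)
        have hbf' : f i ≤ ρ ^ (k + 1) * f b := by
          rw [div_le_iff₀ hρk] at hbf
          calc f i ≤ ρ * f b * ρ ^ k := hbf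
            _ = ρ ^ (k + 1) * f b := by ring
        have hcardlt : S.card < n := by
          have h1 : S ⊂ Finset.univ := Finset.ssubset_univ_iff.2 hU
          have := Finset.card_lt_card h1
          simpa [Finset.card_univ] using this
        refine ⟨insert b S, Finset.mem_insert_of_mem hiS, ?_, ?_⟩
        · rw [Finset.card_insert_of_notMem hbS]
          omega
        · intro a ha
          rcases Finset.mem_insert.1 ha with rfl | haS
          · exact hbf'
          · exact hmono a haS
  intro i j
  obtain ⟨S, _, hcard, hb⟩ := hgrow (n - 1) i
  have hSU : S = Finset.univ := by
    apply Finset.eq_univ_of_card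
    have h1 : S.card ≤ n := by
      have := Finset.card_le_univ S
      simpa [Finset.card_univ] using this
    rw [Fintype.card_fin]
    omega
  rw [hfnorm, hfnorm]
  exact hb j (hSU ▸ Finset.mem_univ j)
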